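/- Let G be a finite group with d(G) ≥ 2 that is 2-flexible. Then G is 1-flexible if and only if Cyc(G) = 1. -/
import Mathlib

noncomputable def dG (G : Type*) [Group G] : ℕ :=
  sInf {n | ∃ s : Finset G, s.card = n ∧ Subgroup.closure (s : Set G) = ⊤}

def Flexible (G : Type*) [Group G] (k : ℕ) : Prop :=
  ∀ x : Fin k → G, dG ↥(Subgroup.closure (Set.range x)) = k →
    ∃ y : Fin (dG G - k) → G, Subgroup.closure (Set.range x ∪ Set.range y) = ⊤

lemma dG_le {G : Type*} [Group G] (s : Finset G)
    (h : Subgroup.closure (s : Set G) = ⊤) : dG G ≤ s.card :=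
  Nat.sInf_le ⟨s, rfl, h⟩

lemma dG_mem {G : Type*} [Group G] [Finite G] :
    ∃ s : Finset G, s.card = dG G ∧ Subgroup.closure (s : Set G) = ⊤ := by
  have : Fintype G := Fintype.ofFinite G
  have hne : {n | ∃ s : Finset G, s.card = n ∧ Subgroup.closure (s : Set G) = ⊤}.Nonempty :=
    ⟨(Finset.univ : Finset G).card, Finset.univ, rfl, by simp [Subgroup.closure_univ]⟩
  obtain ⟨s, hs, hc⟩ := Nat.sInf_mem hne
  exact ⟨s, hs, hc⟩

lemma dG_closure_le {G : Type*} [Group G] (s : Finset G) :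
    dG ↥(Subgroup.closure (s : Set G)) ≤ s.card := by
  set H := Subgroup.closure (s : Set G)
  classical
  set t : Finset ↥H := s.attach.image
    (fun x => ⟨x.1, Subgroup.subset_closure x.2⟩) with ht
  have hsub : (((↑) : ↥H → G) ⁻¹' (s : Set G)) ⊆ (t : Set ↥H) := by
    intro a ha
    simp only [ht, Finset.coe_image, Set.mem_image, Finset.mem_coe, Finset.mem_attach]
    exact ⟨⟨a.1, by simpa using ha⟩, by simp [Subtype.ext_iff]⟩
  have htop : Subgroup.closure (t : Set ↥H) = ⊤ := by
    have := Subgroup.closure_closure_coe_preimage (k := (s : Set G))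
    exact top_unique (this ▸ Subgroup.closure_mono hsub)
  calc dG ↥H ≤ t.card := dG_le t htop
    _ ≤ s.attach.card := Finset.card_image_le
    _ = s.card := Finset.card_attach

lemma dG_zero_of_subsingleton {G : Type*} [Group G] [Subsingleton G] : dG G = 0 := by
  have : dG G ≤ (∅ : Finset G).card := dG_le ∅ (Subsingleton.elim _ _)
  simpa using this

lemma subsingleton_of_dG_zero {G : Type*} [Group G] [Finite G] (h : dG G = 0) :
    Subsingleton G := by
  obtain ⟨s, hs, hc⟩ := dG_mem (G := G)
  rw [h, Finset.card_eq_zero] at hs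
  subst hs
  simp only [Finset.coe_empty, Subgroup.closure_empty] at hc
  refine ⟨fun a b => ?_⟩
  have ha : a ∈ (⊥ : Subgroup G) := hc ▸ Subgroup.mem_top a
  have hb : b ∈ (⊥ : Subgroup G) := hc ▸ Subgroup.mem_top b
  rw [Subgroup.mem_bot] at ha hb
  rw [ha, hb]

lemma isCyclic_of_dG_one {G : Type*} [Group G] [Finite G] (h : dG G = 1) :
    IsCyclic G := by
  obtain ⟨s, hs, hc⟩ := dG_mem (G := G)
  rw [h, Finset.card_eq_one] at hs
  obtain ⟨a, rfl⟩ := hs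
  simp only [Finset.coe_singleton] at hc
  exact ⟨a, fun g => by
    have : g ∈ Subgroup.closure {a} := hc ▸ Subgroup.mem_top g
    simpa [Subgroup.mem_closure_singleton, Subgroup.mem_zpowers_iff] using this⟩

theorem one_flexible_iff_cycliciser_trivial (G : Type*) [Group G] [Finite G]
    (hd : 2 ≤ dG G) (h2 : Flexible G 2)
    (N : Subgroup G) [N.Normal]
    (hN : ∀ c : G, c ∈ N ↔ ∀ g : G, IsCyclic ↥(Subgroup.closure {c, g})) :
    Flexible G 1 ↔ N = ⊥ := by
  classical
  constructor
  · -- Flexible 1 → N = ⊥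
    intro h1
    rw [eq_bot_iff]
    intro c hc
    simp only [Subgroup.mem_bot]
    by_contra hc1
    -- dG ⟨c⟩ = 1
    have hx : Set.range (fun _ : Fin 1 => c) = {c} := by
      ext g; simp [eq_comm]
    have hdc : dG ↥(Subgroup.closure (Set.range (fun _ : Fin 1 => c))) = 1 := by
      rw [hx]
      have hle : dG ↥(Subgroup.closure ({c} : Set G)) ≤ 1 := by
        have h1 : (({c} : Finset G) : Set G) = ({c} : Set G) := by simp
        have := dG_closure_le ({c} : Finset G)
        rw [h1] at this
        simpa using this
      have hne : dG ↥(Subgroup.closure ({c} : Set G)) ≠ 0 := by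
        intro h0
        have := subsingleton_of_dG_zero h0
        have hcm : c ∈ Subgroup.closure ({c} : Set G) := Subgroup.subset_closure rfl
        have h1m : (1 : G) ∈ Subgroup.closure ({c} : Set G) := one_mem _
        have : (⟨c, hcm⟩ : ↥(Subgroup.closure ({c} : Set G))) = ⟨1, h1m⟩ :=
          Subsingleton.elim _ _
        exact hc1 (by simpa [Subtype.ext_iff] using this)
      omega
    obtain ⟨y, hy⟩ := h1 (fun _ : Fin 1 => c) hdc
    rw [hx] at hy
    -- for each i pick a generator z i of ⟨c, y i⟩
    have hz : ∀ i : Fin (dG G - 1), ∃ z : G,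
        c ∈ Subgroup.closure ({z} : Set G) ∧ y i ∈ Subgroup.closure ({z} : Set G) := by
      intro i
      have hcyc := (hN c).mp hc (y i)
      obtain ⟨⟨z, hz⟩, hgen⟩ := hcyc
      refine ⟨z, ?_, ?_⟩
      · have hcm : c ∈ Subgroup.closure ({c, y i} : Set G) :=
          Subgroup.subset_closure (by simp)
        obtain ⟨n, hn⟩ := hgen ⟨c, hcm⟩
        rw [Subgroup.mem_closure_singleton]
        exact ⟨n, by simpa [Subtype.ext_iff] using hn⟩
      · have hym : y i ∈ Subgroup.closure ({c, y i} : Set G) :=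
          Subgroup.subset_closure (by simp)
        obtain ⟨n, hn⟩ := hgen ⟨y i, hym⟩
        rw [Subgroup.mem_closure_singleton]
        exact ⟨n, by simpa [Subtype.ext_iff] using hn⟩
    choose z hzc hzy using hz
    -- G is generated by the z i, of which there are dG G - 1 < dG G
    have hpos : 1 ≤ dG G - 1 := by omega
    set t : Finset G := Finset.univ.image z with htdef
    have htgen : Subgroup.closure (t : Set G) = ⊤ := by
      rw [← top_le_iff, ← hy]
      rw [Subgroup.closure_le]
      intro g hg
      rcases hg with hg | hg
      · rcases hg with rfl
        have : Subgroup.closure ({z ⟨0, by omega⟩} : Set G) ≤ Subgroup.closure (t : Set G) := by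
          apply Subgroup.closure_mono
          intro w hw; rcases hw with rfl
          simp [htdef]
        exact this (hzc ⟨0, by omega⟩)
      · obtain ⟨i, rfl⟩ := hg
        have : Subgroup.closure ({z i} : Set G) ≤ Subgroup.closure (t : Set G) := by
          apply Subgroup.closure_mono
          intro w hw; rcases hw with rfl
          simp [htdef]
        exact this (hzy i)
    have : dG G ≤ t.card := dG_le t htgen
    have htc : t.card ≤ dG G - 1 := by
      calc t.card ≤ Finset.univ.card := Finset.card_image_le
        _ = dG G - 1 := by simp
    omega
  · -- N = ⊥ → Flexible 1
    intro hNbot x hx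
    have hx1 : x 0 ≠ 1 := by
      intro h
      have hr : Set.range x = {(1 : G)} := by
        ext g; constructor
        · rintro ⟨i, rfl⟩; rw [Fin.fin_one_eq_zero i]; exact h
        · rintro rfl; exact ⟨0, h⟩
      rw [hr] at hx
      have : Subgroup.closure ({(1:G)} : Set G) = ⊥ := by simp
      rw [this] at hx
      have : Subsingleton ↥(⊥ : Subgroup G) := inferInstance
      rw [dG_zero_of_subsingleton] at hx
      exact one_ne_zero hx.symm
    -- x 0 ∉ N, so some g with ⟨x 0, g⟩ not cyclic
    have hxN : x 0 ∉ N := by rw [hNbot]; simpa using hx1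
    rw [hN] at hxN
    push_neg at hxN
    obtain ⟨g, hg⟩ := hxN
    -- the pair (x 0, g) generates a dG = 2 subgroup
    set v : Fin 2 → G := ![x 0, g] with hv
    have hrv : Set.range v = {x 0, g} := by
      simp only [hv, Matrix.range_cons, Matrix.range_empty, Set.union_empty,
        Set.union_singleton]
      exact Set.pair_comm g (x 0)
    have hdv : dG ↥(Subgroup.closure (Set.range v)) = 2 := by
      rw [hrv]
      have hle : dG ↥(Subgroup.closure ({x 0, g} : Set G)) ≤ 2 := by
        have h1 : (({x 0, g} : Finset G) : Set G) = ({x 0, g} : Set G) := by simp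
        have := dG_closure_le ({x 0, g} : Finset G)
        rw [h1] at this
        exact this.trans (Finset.card_insert_le _ _ |>.trans (by simp))
      have hne0 : dG ↥(Subgroup.closure ({x 0, g} : Set G)) ≠ 0 := by
        intro h0
        have := subsingleton_of_dG_zero h0
        have hm : x 0 ∈ Subgroup.closure ({x 0, g} : Set G) :=
          Subgroup.subset_closure (by simp)
        have h1m : (1:G) ∈ Subgroup.closure ({x 0, g} : Set G) := one_mem _
        have : (⟨x 0, hm⟩ : ↥(Subgroup.closure ({x 0, g} : Set G))) = ⟨1, h1m⟩ :=
          Subsingleton.elim _ _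
        exact hx1 (by simpa [Subtype.ext_iff] using this)
      have hne1 : dG ↥(Subgroup.closure ({x 0, g} : Set G)) ≠ 1 := by
        intro h1
        exact hg (isCyclic_of_dG_one h1)
      omega
    obtain ⟨y2, hy2⟩ := h2 v hdv
    -- build y : Fin (dG G - 1) → G
    refine ⟨fun i => if h : (i : ℕ) = 0 then g else y2 ⟨(i : ℕ) - 1, by omega⟩, ?_⟩
    rw [← top_le_iff, ← hy2, Subgroup.closure_le]
    intro w hw
    apply Subgroup.subset_closure
    rcases hw with hw | hw
    · rw [hrv] at hw
      rcases hw with rfl | hw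
      · exact Or.inl ⟨0, rfl⟩
      · rcases hw with rfl
        refine Or.inr ⟨⟨0, by omega⟩, ?_⟩
        simp
    · obtain ⟨i, rfl⟩ := hw
      refine Or.inr ⟨⟨(i : ℕ) + 1, by omega⟩, ?_⟩
      simp
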